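/- Let M ∈ ℝ^{d×d} be a monotone matrix, q ∈ ℝ^d, and C ⊆ ℝ^d a nonempty closed convex cone. Suppose λ ∈ ℝ^d satisfies λᵀq < 0 and λᵀ(Mz + w) ≤ 0 for every z ∈ C and every w ∈ N_C(z). Then λ ∈ C, Mλ ∈ C*, and λᵀMλ = 0; i.e., λ solves LCP(M, 0, C). -/

import Mathlib

open Matrix

/-- If `A + t*B ≤ 0` for all `t > 0`, then `B ≤ 0`. -/
private lemma aux_le_zero_of_forall {A B : ℝ} (h : ∀ t : ℝ, 0 < t → A + t * B ≤ 0) :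
    B ≤ 0 := by
  by_contra hB
  push_neg at hB
  have ht : 0 < (|A| + 1) / B := div_pos (by positivity) hB
  have := h _ ht
  rw [div_mul_cancel₀ _ (ne_of_gt hB)] at this
  have : A + (|A| + 1) ≤ 0 := this
  have := neg_abs_le A
  linarith

/-- A certificate of strong infeasibility of `LCP(M, q, C)` solves `LCP(M, 0, C)`:
if `λᵀq < 0` and `λᵀ(Mz + w) ≤ 0` for every `z ∈ C` and `w ∈ N_C(z)`, then
`λ ∈ C`, `Mλ ∈ C*` and `λᵀMλ = 0`. -/
theorem strong_infeasibility_certificate_solves_homogeneous_lcp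
    {d : ℕ} (M : Matrix (Fin d) (Fin d) ℝ) (q : Fin d → ℝ)
    (hM : (M + Mᵀ).PosSemidef)
    (C : Set (Fin d → ℝ))
    (hne : C.Nonempty) (hclosed : IsClosed C) (hconv : Convex ℝ C)
    (hcone : ∀ x ∈ C, ∀ t : ℝ, 0 < t → t • x ∈ C)
    (lam : Fin d → ℝ) (hq : lam ⬝ᵥ q < 0)
    (hsep : ∀ z ∈ C, ∀ w : Fin d → ℝ, (∀ y ∈ C, (y - z) ⬝ᵥ w ≤ 0) →
      lam ⬝ᵥ (M *ᵥ z + w) ≤ 0) :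
    lam ∈ C ∧ (∀ x ∈ C, (M *ᵥ lam) ⬝ᵥ x ≥ 0) ∧ lam ⬝ᵥ (M *ᵥ lam) = 0 := by
  classical
  -- `0 ∈ C`
  obtain ⟨x0, hx0⟩ := hne
  have h0C : (0 : Fin d → ℝ) ∈ C := by
    have hten : Filter.Tendsto (fun t : ℝ => t • x0) (nhdsWithin 0 (Set.Ioi 0))
        (nhds ((0 : ℝ) • x0)) :=
      ((continuous_id.smul continuous_const).tendsto 0).mono_left nhdsWithin_le_nhds
    rw [zero_smul] at hten
    refine hclosed.mem_of_tendsto hten ?_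
    filter_upwards [self_mem_nhdsWithin] with t ht
    exact hcone x0 hx0 t ht
  -- `lam ∈ C` via projection
  have hlamC : lam ∈ C := by
    let K : Set (EuclideanSpace ℝ (Fin d)) := WithLp.ofLp ⁻¹' C
    have hKconv : Convex ℝ K := hconv.linear_preimage (WithLp.linearEquiv 2 ℝ (Fin d → ℝ)).toLinearMap
    have hKne : K.Nonempty := ⟨WithLp.toLp 2 x0, hx0⟩
    have hKcomplete : IsComplete K := by
      have : IsClosed K := hclosed.preimage (PiLp.continuous_ofLp _ _)
      exact this.isComplete
    obtain ⟨v, hvK, hv⟩ :=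
      exists_norm_eq_iInf_of_complete_convex hKne hKcomplete hKconv (WithLp.toLp 2 lam)
    rw [norm_eq_iInf_iff_real_inner_le_zero hKconv hvK] at hv
    let v' : Fin d → ℝ := WithLp.ofLp v
    have hvK' : v' ∈ C := hvK
    have hv' : ∀ y ∈ C, (y - v') ⬝ᵥ (lam - v') ≤ 0 := by
      intro y hy
      have := hv (WithLp.toLp 2 y) hy
      rw [real_inner_comm] at this
      simpa [PiLp.inner_apply, dotProduct, RCLike.inner_apply, dotProduct, v', mul_comm] using this
    -- with the normal cone element `t • (lam - v')` at `v'`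
    have hB : lam ⬝ᵥ (lam - v') ≤ 0 := by
      apply aux_le_zero_of_forall (A := lam ⬝ᵥ (M *ᵥ v'))
      intro t ht
      have hw : ∀ y ∈ C, (y - v') ⬝ᵥ (t • (lam - v')) ≤ 0 := by
        intro y hy
        rw [dotProduct_smul, smul_eq_mul]
        exact mul_nonpos_of_nonneg_of_nonpos ht.le (hv' y hy)
      have := hsep v' hvK' (t • (lam - v')) hw
      rwa [dotProduct_add, dotProduct_smul, smul_eq_mul] at this
    have hv0 : ((0 : Fin d → ℝ) - v') ⬝ᵥ (lam - v') ≤ 0 := hv' 0 h0C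
    have hdiff : (lam - v') ⬝ᵥ (lam - v') ≤ 0 := by
      have heqd : (lam - v') ⬝ᵥ (lam - v')
          = lam ⬝ᵥ (lam - v') + ((0 : Fin d → ℝ) - v') ⬝ᵥ (lam - v') := by
        rw [← add_dotProduct]
        congr 1
        abel
      linarith
    have hzero : (lam - v') ⬝ᵥ (lam - v') = 0 :=
      le_antisymm hdiff (by
        simpa using dotProduct_self_star_nonneg (lam - v'))
    have hsub : lam - v' = 0 := by
      rwa [dotProduct_self_eq_zero] at hzero
    have : lam = v' := sub_eq_zero.mp hsub
    rw [this]; exact hvK'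
  -- `lamᵀ M lam ≤ 0`
  have hle : lam ⬝ᵥ (M *ᵥ lam) ≤ 0 := by
    have := hsep lam hlamC 0 (fun y hy => by simp)
    simpa using this
  -- `lamᵀ M lam ≥ 0` from monotonicity
  have hdot : lam ⬝ᵥ ((M + Mᵀ) *ᵥ lam) = 2 * (lam ⬝ᵥ (M *ᵥ lam)) := by
    rw [add_mulVec, dotProduct_add]
    have : lam ⬝ᵥ (Mᵀ *ᵥ lam) = lam ⬝ᵥ (M *ᵥ lam) := by
      rw [mulVec_transpose, dotProduct_comm, dotProduct_mulVec]
    rw [this]; ring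
  have hge : 0 ≤ lam ⬝ᵥ (M *ᵥ lam) := by
    have := hM.dotProduct_mulVec_nonneg lam
    rw [show star lam = lam from rfl, hdot] at this
    linarith
  have heq : lam ⬝ᵥ (M *ᵥ lam) = 0 := le_antisymm hle hge
  -- kernel fact: `(M + Mᵀ) *ᵥ lam = 0`
  have hker : (M + Mᵀ) *ᵥ lam = 0 := by
    rw [← hM.dotProduct_mulVec_zero_iff lam, show star lam = lam from rfl, hdot, heq]
    ring
  have hMT : Mᵀ *ᵥ lam = -(M *ᵥ lam) := by
    have h : M *ᵥ lam + Mᵀ *ᵥ lam = 0 := by rw [← add_mulVec]; exact hker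
    exact eq_neg_of_add_eq_zero_left (by rwa [add_comm] at h)
  refine ⟨hlamC, ?_, heq⟩
  intro x hx
  -- `lam + x ∈ C`
  have hsum : lam + x ∈ C := by
    have hmid : (1/2 : ℝ) • lam + (1/2 : ℝ) • x ∈ C :=
      hconv hlamC hx (by norm_num) (by norm_num) (by norm_num)
    have := hcone _ hmid 2 (by norm_num)
    have h2 : (2 : ℝ) • ((1/2 : ℝ) • lam + (1/2 : ℝ) • x) = lam + x := by
      rw [smul_add, smul_smul, smul_smul]
      norm_num
    rwa [h2] at this
  have hMx : lam ⬝ᵥ (M *ᵥ x) ≤ 0 := by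
    have := hsep (lam + x) hsum 0 (fun y hy => by simp)
    rw [add_zero, mulVec_add, dotProduct_add, heq, zero_add] at this
    exact this
  have : (M *ᵥ lam) ⬝ᵥ x = -(lam ⬝ᵥ (M *ᵥ x)) := by
    rw [← neg_neg (M *ᵥ lam), ← hMT, mulVec_transpose, neg_dotProduct, ← dotProduct_mulVec]
  rw [this]
  linarith
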